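/- Let K be a commutative ring with unit, X a set, Ω a set of operation symbols, and let > be a monomial ordering on the free operated semigroup 𝔖(X). Let S be a Gröbner–Shirshov basis in K⟨X;Ω⟩, let u₁, u₂ be ⋆-Ω-words, and let s₁, s₂ ∈ S. If w = u₁|_{s̄₁} = u₂|_{s̄₂}, then u₁|_{s₁} ≡ u₂|_{s₂} mod (S, w); that is, u₁|_{s₁} − u₂|_{s₂} = Σᵢ αᵢ vᵢ|_{tᵢ} for some αᵢ ∈ K, ⋆-Ω-words vᵢ, and tᵢ ∈ S with vᵢ|_{t̄ᵢ} < w. -/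

import Mathlib

universe u v

/-! ### The free semigroup `𝔖(X)` with multiple operators `Ω` on a set `X`.

`Ω` is a set of operation symbols, `ar δ` is the arity of the symbol `δ`.
An `Ω`-word is a nonempty product of prime `Ω`-words, and a prime `Ω`-word is either a
letter `x ∈ X` or an expression `δ(u₁, …, u_{ar δ})` with each `uᵢ` an `Ω`-word. -/

mutual
/-- Prime `Ω`-words on `X`: letters and expressions `δ(u₁, …, u_{ar δ})`. -/
inductive OpP (X : Type u) (Ω : Type v) (ar : Ω → ℕ) : Type (max u v)
  | letter : X → OpP X Ω ar
  | node (δ : Ω) (args : OpArgs X Ω ar (ar δ)) : OpP X Ω ar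
/-- `Ω`-words on `X`: nonempty words in prime `Ω`-words.  This is the free operated
semigroup `𝔖(X)`. -/
inductive OpW (X : Type u) (Ω : Type v) (ar : Ω → ℕ) : Type (max u v)
  | single : OpP X Ω ar → OpW X Ω ar
  | cons : OpP X Ω ar → OpW X Ω ar → OpW X Ω ar
/-- Tuples `(u₁, …, uₙ)` of `Ω`-words (arguments of an operation symbol). -/
inductive OpArgs (X : Type u) (Ω : Type v) (ar : Ω → ℕ) : ℕ → Type (max u v)
  | nil : OpArgs X Ω ar 0
  | cons {n : ℕ} : OpW X Ω ar → OpArgs X Ω ar n → OpArgs X Ω ar (n + 1)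
end

variable {X : Type u} {Ω : Type v} {ar : Ω → ℕ}

/-- Concatenation of `Ω`-words. -/
def OpW.append : OpW X Ω ar → OpW X Ω ar → OpW X Ω ar
  | .single p, w => .cons p w
  | .cons p u, w => .cons p (u.append w)

theorem OpW.append_assoc : ∀ a b c : OpW X Ω ar,
    (a.append b).append c = a.append (b.append c)
  | .single _, _, _ => rfl
  | .cons p u, b, c => by
      simp only [OpW.append]
      exact congrArg (OpW.cons p) (OpW.append_assoc u b c)

/-- `𝔖(X)` is a semigroup under concatenation. -/
instance : Semigroup (OpW X Ω ar) where
  mul := OpW.append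
  mul_assoc := OpW.append_assoc

/-- The word consisting of the single letter `x`. -/
def OpW.ofX (x : X) : OpW X Ω ar := .single (.letter x)

/-- The list of prime factors of an `Ω`-word. -/
def OpW.toListP : OpW X Ω ar → List (OpP X Ω ar)
  | .single p => [p]
  | .cons p u => p :: u.toListP

/-- The breadth `bre(u)` of an `Ω`-word: its number of prime factors. -/
def OpW.bre (u : OpW X Ω ar) : ℕ := u.toListP.length

mutual
/-- Weighted count of the letters occurring (anywhere) in a prime `Ω`-word. -/
def OpP.cnt (c : X → ℕ) : OpP X Ω ar → ℕ
  | .letter x => c x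
  | .node _ args => args.cntA c
/-- Weighted count of the letters occurring (anywhere) in an `Ω`-word. -/
def OpW.cnt (c : X → ℕ) : OpW X Ω ar → ℕ
  | .single p => p.cnt c
  | .cons p u => p.cnt c + u.cnt c
/-- Weighted count of the letters occurring in a tuple of `Ω`-words. -/
def OpArgs.cntA (c : X → ℕ) : ∀ {n : ℕ}, OpArgs X Ω ar n → ℕ
  | _, .nil => 0
  | _, .cons w rest => w.cnt c + rest.cntA c
end

mutual
/-- Weighted count of the operation symbols occurring in a prime `Ω`-word. -/
def OpP.opCnt (c : Ω → ℕ) : OpP X Ω ar → ℕ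
  | .letter _ => 0
  | .node δ args => c δ + args.opCntA c
/-- Weighted count of the operation symbols occurring in an `Ω`-word. -/
def OpW.opCnt (c : Ω → ℕ) : OpW X Ω ar → ℕ
  | .single p => p.opCnt c
  | .cons p u => p.opCnt c + u.opCnt c
/-- Weighted count of the operation symbols occurring in a tuple of `Ω`-words. -/
def OpArgs.opCntA (c : Ω → ℕ) : ∀ {n : ℕ}, OpArgs X Ω ar n → ℕ
  | _, .nil => 0
  | _, .cons w rest => w.opCnt c + rest.opCntA c
end

/-! `⋆`-`Ω`-words are `Ω`-words on the alphabet `X ∪ {⋆}` (realized as `Option X`, the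
star being `none`) with exactly one occurrence of the star. -/

mutual
/-- Substitution of the `Ω`-word `w` for every occurrence of the star in a prime. -/
def OpP.subst (w : OpW X Ω ar) : OpP (Option X) Ω ar → OpW X Ω ar
  | .letter none => w
  | .letter (some x) => .single (.letter x)
  | .node δ args => .single (.node δ (args.substA w))
/-- Substitution of the `Ω`-word `w` for every occurrence of the star in a word. -/
def OpW.subst (w : OpW X Ω ar) : OpW (Option X) Ω ar → OpW X Ω ar
  | .single p => OpP.subst w p
  | .cons p u => (OpP.subst w p).append (OpW.subst w u)
/-- Substitution of the `Ω`-word `w` for every occurrence of the star in a tuple. -/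
def OpArgs.substA (w : OpW X Ω ar) : ∀ {n : ℕ}, OpArgs (Option X) Ω ar n → OpArgs X Ω ar n
  | _, .nil => .nil
  | _, .cons a rest => .cons (OpW.subst w a) (OpArgs.substA w rest)
end

/-- The number of occurrences of the star `⋆` in a word on `X ∪ {⋆}`. -/
def starCt (u : OpW (Option X) Ω ar) : ℕ :=
  u.cnt (fun o => match o with | none => 1 | some _ => 0)

/-- `u` is a `⋆`-`Ω`-word: it has exactly one occurrence of the star `⋆`. -/
def IsStar (u : OpW (Option X) Ω ar) : Prop := starCt u = 1

/-- `u|_w`: the result of substituting the `Ω`-word `w` for the star in `u`. -/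
def substW (u : OpW (Option X) Ω ar) (w : OpW X Ω ar) : OpW X Ω ar := OpW.subst w u

/-! ### The free associative algebra `K⟨X; Ω⟩` with multiple linear operators -/

/-- `K⟨X; Ω⟩`: the free `K`-module on `𝔖(X)` with the concatenation (convolution)
product; the free (nonunital) associative `K`-algebra with multiple linear operators. -/
abbrev OpAlg (K : Type w) [CommRing K] (X : Type u) (Ω : Type v) (ar : Ω → ℕ) :=
  MonoidAlgebra K (OpW X Ω ar)

section Framework

variable {K : Type*} [CommRing K]

/-- `u|_s` for an `Ω`-polynomial `s`: the linear extension of substitution, the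
`s`-`Ω`-word associated to the `⋆`-`Ω`-word `u`. -/
noncomputable def substPoly (u : OpW (Option X) Ω ar) (s : OpAlg K X Ω ar) :
    OpAlg K X Ω ar :=
  s.coeff.sum fun w c => MonoidAlgebra.single (substW u w) c

variable (lt : OpW X Ω ar → OpW X Ω ar → Prop)

/-- `w` is the leading `Ω`-word `f̄` of `f` with respect to the order `lt`. -/
def HasLead (f : OpAlg K X Ω ar) (w : OpW X Ω ar) : Prop :=
  w ∈ f.coeff.support ∧ ∀ v ∈ f.coeff.support, v ≠ w → lt v w

/-- `f` is monic with leading word `w`: the coefficient of `f̄ = w` in `f` is `1`. -/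
def MonicAt (f : OpAlg K X Ω ar) (w : OpW X Ω ar) : Prop :=
  HasLead lt f w ∧ f.coeff w = 1

/-- The `Ω`-ideal `Id(S)` generated by `S`: the `K`-span of all `u|_s` with `u` a
`⋆`-`Ω`-word and `s ∈ S`. -/
noncomputable def IdS (S : Set (OpAlg K X Ω ar)) : Submodule K (OpAlg K X Ω ar) :=
  Submodule.span K {q | ∃ u s, IsStar u ∧ s ∈ S ∧ q = substPoly u s}

/-- `p ≡ 0 mod (S, w)`: `p` is a `K`-linear combination of `s`-words `uᵢ|_{sᵢ}`, `sᵢ ∈ S`,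
with `uᵢ|_{s̄ᵢ} < w`. -/
def TrivialMod (S : Set (OpAlg K X Ω ar)) (w : OpW X Ω ar) (p : OpAlg K X Ω ar) : Prop :=
  p ∈ Submodule.span K
    {q | ∃ u s ws, IsStar u ∧ s ∈ S ∧ HasLead lt s ws ∧ lt (substW u ws) w ∧
      q = substPoly u s}

/-- `S` is a Gröbner–Shirshov basis in `K⟨X; Ω⟩` (with respect to the monomial order
`lt`): `S` consists of monic `Ω`-polynomials, and every intersection composition and
inclusion composition of elements of `S` is trivial modulo `(S, w)`. -/
def IsGSB (S : Set (OpAlg K X Ω ar)) : Prop :=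
  (∀ s ∈ S, ∃ w, MonicAt lt s w) ∧
  -- intersection compositions `(f, g)_w = f a - b g`, `w = f̄ a = b ḡ`,
  -- `bre(w) < bre(f̄) + bre(ḡ)`:
  (∀ f ∈ S, ∀ g ∈ S, ∀ wf wg a b : OpW X Ω ar,
    HasLead lt f wf → HasLead lt g wg → wf * a = b * wg →
    OpW.bre (wf * a) < OpW.bre wf + OpW.bre wg →
    TrivialMod lt S (wf * a) (f * MonoidAlgebra.single a 1 - MonoidAlgebra.single b 1 * g)) ∧
  -- inclusion compositions `(f, g)_w = f - u|_g`, `w = f̄ = u|_{ḡ}`: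
  (∀ f ∈ S, ∀ g ∈ S, ∀ wf wg : OpW X Ω ar, ∀ u : OpW (Option X) Ω ar,
    HasLead lt f wf → HasLead lt g wg → IsStar u → wf = substW u wg →
    TrivialMod lt S wf (f - substPoly u g))

/-- `Irr(S)`: the set of `Ω`-words which are not of the form `u|_{s̄}` for a `⋆`-`Ω`-word
`u` and `s ∈ S`. -/
def IrrSet (S : Set (OpAlg K X Ω ar)) : Set (OpW X Ω ar) :=
  {w | ¬ ∃ u s ws, IsStar u ∧ s ∈ S ∧ HasLead lt s ws ∧ w = substW u ws}

end Framework


/-! ### Auxiliary infrastructure -/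

namespace GSB

section Words

variable {X : Type u} {Ω : Type v} {ar : Ω → ℕ}

/-- The star-counting weight. -/
def sf : Option X → ℕ := fun o => match o with | none => 1 | some _ => 0

theorem starCt_def (u : OpW (Option X) Ω ar) : starCt u = u.cnt sf := rfl

theorem toListP_ne_nil (u : OpW X Ω ar) : u.toListP ≠ [] := by
  cases u <;> simp [OpW.toListP]

theorem toListP_inj : ∀ (a b : OpW X Ω ar), a.toListP = b.toListP → a = b
  | .single _, .single _, h => by
      simp only [OpW.toListP, List.cons.injEq] at h; rw [h.1]
  | .single _, .cons _ v, h => by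
      simp only [OpW.toListP, List.cons.injEq] at h
      exact absurd h.2.symm (toListP_ne_nil v)
  | .cons _ u, .single _, h => by
      simp only [OpW.toListP, List.cons.injEq] at h
      exact absurd h.2 (toListP_ne_nil u)
  | .cons _ u, .cons _ v, h => by
      simp only [OpW.toListP, List.cons.injEq] at h
      rw [h.1, toListP_inj u v h.2]

theorem append_toListP : ∀ (a b : OpW X Ω ar),
    (a.append b).toListP = a.toListP ++ b.toListP
  | .single _, _ => rfl
  | .cons p u, b => by
      simp only [OpW.append, OpW.toListP, append_toListP u b, List.cons_append]

theorem mul_toListP (a b : OpW X Ω ar) : (a * b).toListP = a.toListP ++ b.toListP :=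
  append_toListP a b

theorem cnt_append (c : X → ℕ) : ∀ (a b : OpW X Ω ar),
    (a.append b).cnt c = a.cnt c + b.cnt c
  | .single _, _ => rfl
  | .cons p u, b => by
      simp only [OpW.append, OpW.cnt, cnt_append c u b]; ring

theorem cnt_toListP (c : X → ℕ) : ∀ (u : OpW X Ω ar),
    u.cnt c = (u.toListP.map (OpP.cnt c)).sum
  | .single p => by simp [OpW.toListP, OpW.cnt]
  | .cons p u => by simp [OpW.toListP, OpW.cnt, cnt_toListP c u]

/-- Prepend a list of primes to a word. -/
def preL : List (OpP X Ω ar) → OpW X Ω ar → OpW X Ω ar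
  | [], w => w
  | p :: l, w => .cons p (preL l w)

/-- The word with prime factors `p :: l`. -/
def wOf (p : OpP X Ω ar) : List (OpP X Ω ar) → OpW X Ω ar
  | [] => .single p
  | q :: l => .cons p (wOf q l)

/-- Append a list of primes to a word. -/
def postL (w : OpW X Ω ar) : List (OpP X Ω ar) → OpW X Ω ar
  | [] => w
  | p :: l => w.append (wOf p l)

theorem preL_toListP (l : List (OpP X Ω ar)) (w : OpW X Ω ar) :
    (preL l w).toListP = l ++ w.toListP := by
  induction l with
  | nil => rfl
  | cons p l ih => simp [preL, OpW.toListP, ih]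

theorem wOf_toListP (p : OpP X Ω ar) (l : List (OpP X Ω ar)) :
    (wOf p l).toListP = p :: l := by
  induction l generalizing p with
  | nil => rfl
  | cons q l ih => simp [wOf, OpW.toListP, ih]

theorem postL_toListP (w : OpW X Ω ar) (l : List (OpP X Ω ar)) :
    (postL w l).toListP = w.toListP ++ l := by
  cases l with
  | nil => simp [postL]
  | cons p l => simp [postL, append_toListP, wOf_toListP]

mutual
/-- Injection of primes over `X` into primes over `X ∪ {⋆}`. -/
def pInj : OpP X Ω ar → OpP (Option X) Ω ar
  | .letter x => .letter (some x)
  | .node δ args => .node δ (argsInj args)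
/-- Injection of words over `X` into words over `X ∪ {⋆}`. -/
def wInj : OpW X Ω ar → OpW (Option X) Ω ar
  | .single p => .single (pInj p)
  | .cons p u => .cons (pInj p) (wInj u)
/-- Injection of argument tuples over `X` into tuples over `X ∪ {⋆}`. -/
def argsInj : ∀ {n : ℕ}, OpArgs X Ω ar n → OpArgs (Option X) Ω ar n
  | _, .nil => .nil
  | _, .cons w rest => .cons (wInj w) (argsInj rest)
end

mutual
theorem subst_pInj (w : OpW X Ω ar) (p : OpP X Ω ar) :
    OpP.subst w (pInj p) = .single p := by
  cases p with
  | letter x => rfl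
  | node δ args => rw [pInj, OpP.subst, substA_argsInj]
theorem subst_wInj (w : OpW X Ω ar) (u : OpW X Ω ar) :
    OpW.subst w (wInj u) = u := by
  cases u with
  | single p => rw [wInj, OpW.subst, subst_pInj]
  | cons p v => rw [wInj, OpW.subst, subst_pInj, subst_wInj]; rfl
theorem substA_argsInj (w : OpW X Ω ar) {n : ℕ} (a : OpArgs X Ω ar n) :
    OpArgs.substA w (argsInj a) = a := by
  cases a with
  | nil => rfl
  | cons v rest => rw [argsInj, OpArgs.substA, subst_wInj, substA_argsInj]
end

mutual
theorem cnt_pInj (p : OpP X Ω ar) : OpP.cnt sf (pInj p) = 0 := by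
  cases p with
  | letter x => rfl
  | node δ args => rw [pInj, OpP.cnt, cnt_argsInj]
theorem cnt_wInj (u : OpW X Ω ar) : OpW.cnt sf (wInj u) = 0 := by
  cases u with
  | single p => rw [wInj, OpW.cnt, cnt_pInj]
  | cons p v => rw [wInj, OpW.cnt, cnt_pInj, cnt_wInj]
theorem cnt_argsInj {n : ℕ} (a : OpArgs X Ω ar n) : OpArgs.cntA sf (argsInj a) = 0 := by
  cases a with
  | nil => rfl
  | cons v rest => rw [argsInj, OpArgs.cntA, cnt_wInj, cnt_argsInj]
end

mutual
theorem pstarFree (p : OpP (Option X) Ω ar) (h : OpP.cnt sf p = 0) :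
    ∃ q, p = pInj q := by
  cases p with
  | letter x => cases x with
    | none => exact absurd h one_ne_zero
    | some y => exact ⟨.letter y, rfl⟩
  | node δ args =>
      obtain ⟨b, hb⟩ := astarFree args h
      exact ⟨.node δ b, by rw [hb]; rfl⟩
theorem wstarFree (u : OpW (Option X) Ω ar) (h : OpW.cnt sf u = 0) :
    ∃ v, u = wInj v := by
  cases u with
  | single p =>
      obtain ⟨q, hq⟩ := pstarFree p h
      exact ⟨.single q, by rw [hq]; rfl⟩
  | cons p v =>
      rw [OpW.cnt] at h
      obtain ⟨q, hq⟩ := pstarFree p (Nat.eq_zero_of_add_eq_zero_right h)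
      obtain ⟨v', hv'⟩ := wstarFree v (Nat.eq_zero_of_add_eq_zero_left h)
      exact ⟨.cons q v', by rw [hq, hv']; rfl⟩
theorem astarFree {n : ℕ} (a : OpArgs (Option X) Ω ar n) (h : OpArgs.cntA sf a = 0) :
    ∃ b, a = argsInj b := by
  cases a with
  | nil => exact ⟨.nil, rfl⟩
  | cons v rest =>
      rw [OpArgs.cntA] at h
      obtain ⟨v', hv'⟩ := wstarFree v (Nat.eq_zero_of_add_eq_zero_right h)
      obtain ⟨b, hb⟩ := astarFree rest (Nat.eq_zero_of_add_eq_zero_left h)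
      exact ⟨.cons v' b, by rw [hv', hb]; rfl⟩
end

mutual
/-- Plug a word `v` (over `X ∪ {⋆}`) in place of the star in a prime. -/
def pPlug (v : OpW (Option X) Ω ar) : OpP (Option X) Ω ar → OpW (Option X) Ω ar
  | .letter none => v
  | .letter (some x) => .single (.letter (some x))
  | .node δ args => .single (.node δ (argsPlug v args))
/-- Plug a word `v` (over `X ∪ {⋆}`) in place of the star in a word: composition of
`⋆`-contexts. -/
def wPlug (v : OpW (Option X) Ω ar) : OpW (Option X) Ω ar → OpW (Option X) Ω ar
  | .single p => pPlug v p
  | .cons p u => (pPlug v p).append (wPlug v u)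
/-- Plug a word `v` in place of the star in an argument tuple. -/
def argsPlug (v : OpW (Option X) Ω ar) :
    ∀ {n : ℕ}, OpArgs (Option X) Ω ar n → OpArgs (Option X) Ω ar n
  | _, .nil => .nil
  | _, .cons w rest => .cons (wPlug v w) (argsPlug v rest)
end

theorem subst_append (z : OpW X Ω ar) : ∀ (a b : OpW (Option X) Ω ar),
    OpW.subst z (a.append b) = (OpW.subst z a).append (OpW.subst z b)
  | .single p, b => rfl
  | .cons p u, b => by
      simp [OpW.append, OpW.subst, subst_append z u b, OpW.append_assoc]

mutual
theorem subst_pPlug (z : OpW X Ω ar) (v : OpW (Option X) Ω ar) (p : OpP (Option X) Ω ar) :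
    OpW.subst z (pPlug v p) = OpP.subst (OpW.subst z v) p := by
  cases p with
  | letter x => cases x with
    | none => rfl
    | some y => rfl
  | node δ args => simp only [pPlug, OpW.subst, OpP.subst, subst_argsPlug]
theorem subst_wPlug (z : OpW X Ω ar) (v : OpW (Option X) Ω ar) (u : OpW (Option X) Ω ar) :
    OpW.subst z (wPlug v u) = OpW.subst (OpW.subst z v) u := by
  cases u with
  | single p => rw [wPlug, OpW.subst, subst_pPlug]
  | cons p w => rw [wPlug, subst_append, subst_pPlug, subst_wPlug, OpW.subst]
theorem subst_argsPlug (z : OpW X Ω ar) (v : OpW (Option X) Ω ar) {n : ℕ}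
    (a : OpArgs (Option X) Ω ar n) :
    OpArgs.substA z (argsPlug v a) = OpArgs.substA (OpW.subst z v) a := by
  cases a with
  | nil => rfl
  | cons w rest => rw [argsPlug, OpArgs.substA, subst_wPlug, subst_argsPlug, OpArgs.substA]
end

mutual
theorem cnt_pPlug (v : OpW (Option X) Ω ar) (p : OpP (Option X) Ω ar) :
    OpW.cnt sf (pPlug v p) = OpP.cnt sf p * OpW.cnt sf v := by
  cases p with
  | letter x => cases x with
    | none => simp [pPlug, OpP.cnt, sf]
    | some y => simp [pPlug, OpP.cnt, OpW.cnt, sf]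
  | node δ args => rw [pPlug, OpW.cnt, OpP.cnt, OpP.cnt, cnt_argsPlug]
theorem cnt_wPlug (v : OpW (Option X) Ω ar) (u : OpW (Option X) Ω ar) :
    OpW.cnt sf (wPlug v u) = OpW.cnt sf u * OpW.cnt sf v := by
  cases u with
  | single p => rw [wPlug, cnt_pPlug, OpW.cnt]
  | cons p w => rw [wPlug, cnt_append, cnt_pPlug, cnt_wPlug, OpW.cnt, add_mul]
theorem cnt_argsPlug (v : OpW (Option X) Ω ar) {n : ℕ} (a : OpArgs (Option X) Ω ar n) :
    OpArgs.cntA sf (argsPlug v a) = OpArgs.cntA sf a * OpW.cnt sf v := by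
  cases a with
  | nil => simp only [argsPlug, OpArgs.cntA, zero_mul]
  | cons w rest => simp only [argsPlug, OpArgs.cntA, cnt_wPlug, cnt_argsPlug, add_mul]
end

theorem isStar_wPlug {v u : OpW (Option X) Ω ar} (hv : IsStar v) (hu : IsStar u) :
    IsStar (wPlug v u) := by
  rw [IsStar, starCt_def] at *
  rw [cnt_wPlug, hv, hu]

theorem substW_wPlug (v u : OpW (Option X) Ω ar) (z : OpW X Ω ar) :
    substW (wPlug v u) z = substW u (substW v z) := subst_wPlug z v u


/-- List-level substitution: splice `(OpP.subst w p).toListP` for each prime `p`. -/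
def substL (w : OpW X Ω ar) (l : List (OpP (Option X) Ω ar)) : List (OpP X Ω ar) :=
  l.flatMap fun p => (OpP.subst w p).toListP

theorem substL_nil (w : OpW X Ω ar) : substL w [] = [] := rfl

theorem substL_cons (w : OpW X Ω ar) (p : OpP (Option X) Ω ar)
    (l : List (OpP (Option X) Ω ar)) :
    substL w (p :: l) = (OpP.subst w p).toListP ++ substL w l := rfl

theorem substL_append (w : OpW X Ω ar) (l₁ l₂ : List (OpP (Option X) Ω ar)) :
    substL w (l₁ ++ l₂) = substL w l₁ ++ substL w l₂ := List.flatMap_append ..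

theorem subst_toListP (w : OpW X Ω ar) : ∀ (u : OpW (Option X) Ω ar),
    (OpW.subst w u).toListP = substL w u.toListP
  | .single p => by simp [OpW.subst, OpW.toListP, substL]
  | .cons p u => by
      simp only [OpW.subst, OpW.toListP, append_toListP, subst_toListP w u, substL_cons]

theorem substL_map_pInj (w : OpW X Ω ar) (l : List (OpP X Ω ar)) :
    substL w (l.map pInj) = l := by
  induction l with
  | nil => rfl
  | cons p l ih => simp [substL_cons, subst_pInj, OpW.toListP, ih]

theorem substW_toListP (u : OpW (Option X) Ω ar) (w : OpW X Ω ar) :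
    (substW u w).toListP = substL w u.toListP := subst_toListP w u

/-- Star count of a prime in list form. -/
theorem starCt_toListP (u : OpW (Option X) Ω ar) :
    starCt u = (u.toListP.map (OpP.cnt sf)).sum := by
  rw [starCt_def, cnt_toListP]

/-! ### The `ℕ`-valued size measure (number of operation symbols) -/

/-- One. -/
def one : Ω → ℕ := fun _ => 1

theorem opCnt_append : ∀ (a b : OpW X Ω ar),
    (a.append b).opCnt one = a.opCnt one + b.opCnt one
  | .single _, _ => rfl
  | .cons p u, b => by
      simp only [OpW.append, OpW.opCnt, opCnt_append u b]; ring

theorem opCnt_toListP : ∀ (u : OpW X Ω ar),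
    u.opCnt one = (u.toListP.map (OpP.opCnt one)).sum
  | .single p => by simp [OpW.toListP, OpW.opCnt]
  | .cons p u => by simp [OpW.toListP, OpW.opCnt, opCnt_toListP u]

/-! ### Lists of arguments -/

/-- The list of entries of an argument tuple. -/
def argsToList : ∀ {n : ℕ}, OpArgs X Ω ar n → List (OpW X Ω ar)
  | _, .nil => []
  | _, .cons w rest => w :: argsToList rest

theorem argsToList_length : ∀ {n : ℕ} (a : OpArgs X Ω ar n), (argsToList a).length = n
  | _, .nil => rfl
  | _, .cons w rest => by simp [argsToList, argsToList_length rest]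

theorem argsToList_inj : ∀ {n : ℕ} (a b : OpArgs X Ω ar n),
    argsToList a = argsToList b → a = b
  | _, .nil, .nil, _ => rfl
  | _, .cons w r, .cons w' r', h => by
      simp only [argsToList, List.cons.injEq] at h
      rw [h.1, argsToList_inj r r' h.2]

/-- Rebuild an argument tuple from a list. -/
def argsOfList : (l : List (OpW X Ω ar)) → OpArgs X Ω ar l.length
  | [] => .nil
  | w :: l => .cons w (argsOfList l)

/-- Cast an argument tuple along a length equality. -/
def argsCast {m n : ℕ} (h : m = n) (a : OpArgs X Ω ar m) : OpArgs X Ω ar n := h ▸ a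

theorem argsToList_cast {m n : ℕ} (h : m = n) (a : OpArgs X Ω ar m) :
    argsToList (argsCast h a) = argsToList a := by subst h; rfl

theorem argsToList_ofList : ∀ (l : List (OpW X Ω ar)), argsToList (argsOfList l) = l
  | [] => rfl
  | w :: l => by simp [argsOfList, argsToList, argsToList_ofList l]

/-- Make an argument tuple of prescribed length from a list. -/
def argsMk (l : List (OpW X Ω ar)) {n : ℕ} (h : l.length = n) : OpArgs X Ω ar n :=
  argsCast h (argsOfList l)

theorem argsToList_mk (l : List (OpW X Ω ar)) {n : ℕ} (h : l.length = n) :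
    argsToList (argsMk l h) = l := by
  rw [argsMk, argsToList_cast, argsToList_ofList]

theorem substA_toList (w : OpW X Ω ar) : ∀ {n : ℕ} (a : OpArgs (Option X) Ω ar n),
    argsToList (OpArgs.substA w a) = (argsToList a).map (OpW.subst w)
  | _, .nil => rfl
  | _, .cons v rest => by
      simp [OpArgs.substA, argsToList, substA_toList w rest]

theorem cntA_toList (c : X → ℕ) : ∀ {n : ℕ} (a : OpArgs X Ω ar n),
    OpArgs.cntA c a = ((argsToList a).map (OpW.cnt c)).sum
  | _, .nil => rfl
  | _, .cons v rest => by simp [OpArgs.cntA, argsToList, cntA_toList c rest]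

theorem argsInj_toList : ∀ {n : ℕ} (a : OpArgs X Ω ar n),
    argsToList (argsInj a) = (argsToList a).map wInj
  | _, .nil => rfl
  | _, .cons v rest => by simp [argsInj, argsToList, argsInj_toList rest]

theorem opCntA_toList : ∀ {n : ℕ} (a : OpArgs X Ω ar n),
    OpArgs.opCntA one a = ((argsToList a).map (OpW.opCnt one)).sum
  | _, .nil => rfl
  | _, .cons v rest => by simp [OpArgs.opCntA, argsToList, opCntA_toList rest]

/-! ### Star decomposition -/

theorem starList_decomp : ∀ (t : List (OpP (Option X) Ω ar)),
    (t.map (OpP.cnt sf)).sum = 1 →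
    ∃ (l : List (OpP X Ω ar)) (p : OpP (Option X) Ω ar) (r : List (OpP X Ω ar)),
      t = l.map pInj ++ p :: r.map pInj ∧ OpP.cnt sf p = 1
  | [], h => by simp at h
  | q :: t, h => by
      simp only [List.map_cons, List.sum_cons] at h
      rcases Nat.eq_zero_or_pos (OpP.cnt sf q) with hq | hq
      · rw [hq, zero_add] at h
        obtain ⟨q₀, hq₀⟩ := pstarFree q hq
        obtain ⟨l, p, r, hl, hp⟩ := starList_decomp t h
        exact ⟨q₀ :: l, p, r, by rw [hq₀, hl]; simp, hp⟩
      · have hq1 : OpP.cnt sf q = 1 := le_antisymm (by omega) hq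
        have ht : ((t.map (OpP.cnt sf))).sum = 0 := by omega
        have hz : ∀ x ∈ t, OpP.cnt sf x = 0 := fun x hx =>
          List.sum_eq_zero_iff.mp ht (OpP.cnt sf x) (List.mem_map_of_mem hx)
        have : ∃ r : List (OpP X Ω ar), t = r.map pInj := by
          clear h ht hq hq1
          induction t with
          | nil => exact ⟨[], rfl⟩
          | cons x t' ih' =>
              obtain ⟨x₀, hx₀⟩ := pstarFree x (hz x (by simp))
              obtain ⟨r', hr'⟩ := ih' (fun y hy => hz y (by simp [hy]))
              exact ⟨x₀ :: r', by rw [hx₀, hr']; rfl⟩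
        obtain ⟨r, hr⟩ := this
        exact ⟨[], q, r, by rw [hr]; simp, hq1⟩

theorem star_decomp {u : OpW (Option X) Ω ar} (h : IsStar u) :
    ∃ (l : List (OpP X Ω ar)) (p : OpP (Option X) Ω ar) (r : List (OpP X Ω ar)),
      u.toListP = l.map pInj ++ p :: r.map pInj ∧ OpP.cnt sf p = 1 := by
  rw [IsStar, starCt_toListP] at h
  exact starList_decomp u.toListP h

theorem starPrime_cases {p : OpP (Option X) Ω ar} (h : OpP.cnt sf p = 1) :
    p = .letter none ∨ ∃ δ args, p = .node δ args ∧ OpArgs.cntA sf args = 1 := by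
  cases p with
  | letter x => cases x with
    | none => exact Or.inl rfl
    | some y => exact absurd h (by simp [OpP.cnt, sf])
  | node δ args => exact Or.inr ⟨δ, args, rfl, h⟩

theorem args_star_decomp : ∀ {n : ℕ} (args : OpArgs (Option X) Ω ar n),
    OpArgs.cntA sf args = 1 →
    ∃ (A : List (OpW X Ω ar)) (v : OpW (Option X) Ω ar) (B : List (OpW X Ω ar)),
      argsToList args = A.map wInj ++ v :: B.map wInj ∧ IsStar v
  | _, .nil, h => absurd h (by simp [OpArgs.cntA])
  | _, .cons x rest, h => by
      rw [OpArgs.cntA] at h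
      rcases Nat.eq_zero_or_pos (OpW.cnt sf x) with hx | hx
      · rw [hx, zero_add] at h
        obtain ⟨x₀, hx₀⟩ := wstarFree x hx
        obtain ⟨A, v, B, hL, hv⟩ := args_star_decomp rest h
        exact ⟨x₀ :: A, v, B, by rw [argsToList, hx₀, hL]; simp, hv⟩
      · have hx1 : OpW.cnt sf x = 1 := le_antisymm (by omega) hx
        have hrest : OpArgs.cntA sf rest = 0 := by omega
        obtain ⟨r₀, hr₀⟩ := astarFree rest hrest
        refine ⟨[], x, argsToList r₀, ?_, hx1⟩
        rw [argsToList, hr₀, argsInj_toList]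
        simp


/-! ### Star contexts built from lists -/

/-- The one-letter star word `⋆`. -/
def starW : OpW (Option X) Ω ar := .single (.letter none)

/-- Star context: star-free prefix `l`, middle word `mid`, star-free suffix `r`. -/
def ctx (l : List (OpP X Ω ar)) (mid : OpW (Option X) Ω ar) (r : List (OpP X Ω ar)) :
    OpW (Option X) Ω ar :=
  preL (l.map pInj) (postL mid (r.map pInj))

theorem ctx_toListP (l : List (OpP X Ω ar)) (mid : OpW (Option X) Ω ar)
    (r : List (OpP X Ω ar)) :
    (ctx l mid r).toListP = l.map pInj ++ mid.toListP ++ r.map pInj := by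
  rw [ctx, preL_toListP, postL_toListP, List.append_assoc]

theorem starCt_ctx (l : List (OpP X Ω ar)) (mid : OpW (Option X) Ω ar)
    (r : List (OpP X Ω ar)) : starCt (ctx l mid r) = starCt mid := by
  rw [starCt_toListP, starCt_toListP, ctx_toListP]
  simp [List.map_map, Function.comp_def, cnt_pInj]

theorem starCt_starW : starCt (starW : OpW (Option X) Ω ar) = 1 := rfl

theorem starCt_single {p : OpP (Option X) Ω ar} (h : OpP.cnt sf p = 1) :
    starCt (OpW.single p) = 1 := h

theorem substL_single (z : OpW X Ω ar) (p : OpP (Option X) Ω ar) :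
    substL z ((OpW.single p : OpW (Option X) Ω ar)).toListP = (OpP.subst z p).toListP := by
  simp [OpW.toListP, substL]

theorem substW_ctx (l : List (OpP X Ω ar)) (mid : OpW (Option X) Ω ar)
    (r : List (OpP X Ω ar)) (z : OpW X Ω ar) :
    (substW (ctx l mid r) z).toListP = l ++ substL z mid.toListP ++ r := by
  rw [substW_toListP, ctx_toListP, substL_append, substL_append, substL_map_pInj,
    substL_map_pInj]

theorem substL_starW (z : OpW X Ω ar) :
    substL z ((starW : OpW (Option X) Ω ar)).toListP = z.toListP := by
  simp [starW, OpW.toListP, substL, OpP.subst]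

/-! ### Size measure lemmas -/

theorem opCnt_mem_toListP {p : OpP X Ω ar} {u : OpW X Ω ar} (h : p ∈ u.toListP) :
    OpP.opCnt one p ≤ OpW.opCnt one u := by
  rw [opCnt_toListP]
  exact List.le_sum_of_mem (List.mem_map_of_mem h)

theorem opCnt_mem_args {v : OpW X Ω ar} {n : ℕ} {a : OpArgs X Ω ar n}
    (h : v ∈ argsToList a) : OpW.opCnt one v ≤ OpArgs.opCntA one a := by
  rw [opCntA_toList]
  exact List.le_sum_of_mem (List.mem_map_of_mem h)

/-! ### The five relative positions of two occurrences -/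

variable (lt : OpW X Ω ar → OpW X Ω ar → Prop)

/-- The conclusion of the structural analysis: two occurrences `u₁|_{w₁} = u₂|_{w₂}` are
disjoint, nested (in either order), or overlapping (in either order). -/
def Rel (u₁ : OpW (Option X) Ω ar) (w₁ : OpW X Ω ar)
    (u₂ : OpW (Option X) Ω ar) (w₂ : OpW X Ω ar) : Prop :=
  (∃ c₁ c₂ : OpW X Ω ar → OpW (Option X) Ω ar,
    (∀ z, IsStar (c₁ z)) ∧ (∀ z, IsStar (c₂ z)) ∧
    (∀ z z', substW (c₁ z) z' = substW (c₂ z') z) ∧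
    (∀ z', substW u₁ z' = substW (c₁ w₂) z') ∧
    (∀ z, substW u₂ z = substW (c₂ w₁) z))
  ∨ (∃ v, IsStar v ∧ substW v w₂ = w₁ ∧ ∀ z, substW u₂ z = substW u₁ (substW v z))
  ∨ (∃ v, IsStar v ∧ substW v w₁ = w₂ ∧ ∀ z, substW u₁ z = substW u₂ (substW v z))
  ∨ (∃ a b U, IsStar U ∧ w₁ * a = b * w₂ ∧ OpW.bre (w₁ * a) < OpW.bre w₁ + OpW.bre w₂ ∧
      (∀ z, substW u₁ z = substW U (z * a)) ∧ (∀ z, substW u₂ z = substW U (b * z)))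
  ∨ (∃ a b U, IsStar U ∧ w₂ * a = b * w₁ ∧ OpW.bre (w₂ * a) < OpW.bre w₂ + OpW.bre w₁ ∧
      (∀ z, substW u₂ z = substW U (z * a)) ∧ (∀ z, substW u₁ z = substW U (b * z)))

theorem Rel.swap {u₁ u₂ : OpW (Option X) Ω ar} {w₁ w₂ : OpW X Ω ar}
    (h : Rel u₁ w₁ u₂ w₂) : Rel u₂ w₂ u₁ w₁ := by
  rcases h with ⟨c₁, c₂, h1, h2, h3, h4, h5⟩ | h | h | h | h
  · exact Or.inl ⟨c₂, c₁, h2, h1, fun z z' => (h3 z' z).symm, h5, h4⟩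
  · exact Or.inr (Or.inr (Or.inl h))
  · exact Or.inr (Or.inl h)
  · exact Or.inr (Or.inr (Or.inr (Or.inr h)))
  · exact Or.inr (Or.inr (Or.inr (Or.inl h)))

theorem Rel.lift {u₁ u₂ u₁' u₂' : OpW (Option X) Ω ar} {w₁ w₂ : OpW X Ω ar}
    (U₀ : OpW (Option X) Ω ar) (hU₀ : IsStar U₀)
    (h₁ : ∀ z, substW u₁' z = substW U₀ (substW u₁ z))
    (h₂ : ∀ z, substW u₂' z = substW U₀ (substW u₂ z))
    (h : Rel u₁ w₁ u₂ w₂) : Rel u₁' w₁ u₂' w₂ := by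
  rcases h with ⟨c₁, c₂, hc1, hc2, hc3, hc4, hc5⟩ | ⟨v, hv, hvw, hpt⟩ | ⟨v, hv, hvw, hpt⟩ |
    ⟨a, b, U, hU, hab, hbre, hp1, hp2⟩ | ⟨a, b, U, hU, hab, hbre, hp1, hp2⟩
  · refine Or.inl ⟨fun z => wPlug (c₁ z) U₀, fun z => wPlug (c₂ z) U₀,
      fun z => isStar_wPlug (hc1 z) hU₀, fun z => isStar_wPlug (hc2 z) hU₀, ?_, ?_, ?_⟩
    · intro z z'; rw [substW_wPlug, substW_wPlug, hc3]
    · intro z'; rw [substW_wPlug, h₁, hc4]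
    · intro z; rw [substW_wPlug, h₂, hc5]
  · exact Or.inr (Or.inl ⟨v, hv, hvw, fun z => by rw [h₂, hpt, h₁]⟩)
  · exact Or.inr (Or.inr (Or.inl ⟨v, hv, hvw, fun z => by rw [h₁, hpt, h₂]⟩))
  · refine Or.inr (Or.inr (Or.inr (Or.inl ⟨a, b, wPlug U U₀, isStar_wPlug hU hU₀,
      hab, hbre, ?_, ?_⟩)))
    · intro z; rw [substW_wPlug, h₁, hp1]
    · intro z; rw [substW_wPlug, h₂, hp2]
  · refine Or.inr (Or.inr (Or.inr (Or.inr ⟨a, b, wPlug U U₀, isStar_wPlug hU hU₀,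
      hab, hbre, ?_, ?_⟩)))
    · intro z; rw [substW_wPlug, h₂, hp1]
    · intro z; rw [substW_wPlug, h₁, hp2]


/-! ### Helper computation lemmas -/

theorem substW_def (u : OpW (Option X) Ω ar) (w : OpW X Ω ar) :
    substW u w = OpW.subst w u := rfl

theorem subst_letter_none (z : OpW X Ω ar) :
    OpP.subst z (OpP.letter none : OpP (Option X) Ω ar) = z := rfl

theorem subst_starW (z : OpW X Ω ar) : OpW.subst z (starW : OpW (Option X) Ω ar) = z := rfl

theorem subst_node (z : OpW X Ω ar) (δ : Ω) (a : OpArgs (Option X) Ω ar (ar δ)) :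
    OpP.subst z (OpP.node δ a) = .single (.node δ (OpArgs.substA z a)) := rfl

theorem substW_decomp {u : OpW (Option X) Ω ar} {l r : List (OpP X Ω ar)}
    {p : OpP (Option X) Ω ar}
    (hd : u.toListP = l.map pInj ++ p :: r.map pInj) (z : OpW X Ω ar) :
    (substW u z).toListP = l ++ ((OpP.subst z p).toListP ++ r) := by
  rw [substW_toListP, hd, substL_append, substL_map_pInj, substL_cons, substL_map_pInj]

theorem substW_ctx_node (l r : List (OpP X Ω ar)) {δ : Ω}
    (a : OpArgs (Option X) Ω ar (ar δ)) (z : OpW X Ω ar) :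
    (substW (ctx l (.single (.node δ a)) r) z).toListP
      = l ++ (OpP.node δ (OpArgs.substA z a) :: r) := by
  rw [substW_ctx, substL_single, subst_node]
  simp [OpW.toListP]

theorem substA_argsMk (z : OpW X Ω ar) (L : List (OpW (Option X) Ω ar)) {n : ℕ}
    (h : L.length = n) :
    argsToList (OpArgs.substA z (argsMk L h)) = L.map (OpW.subst z) := by
  rw [substA_toList, argsToList_mk]

theorem sum_cnt_map_wInj (A : List (OpW X Ω ar)) :
    (((A.map wInj).map (OpW.cnt sf)).sum) = 0 := by
  rw [List.map_map]
  exact List.sum_eq_zero (by simp [Function.comp_def, cnt_wInj])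

/-! ### The case lemmas -/

section Cases

variable {u₁ u₂ : OpW (Option X) Ω ar} {w₁ w₂ : OpW X Ω ar}
  {l₁ r₁ l₂ r₂ : List (OpP X Ω ar)} {p₁ p₂ : OpP (Option X) Ω ar}

theorem caseDisj
    (hd₁ : u₁.toListP = l₁.map pInj ++ p₁ :: r₁.map pInj) (hp₁ : OpP.cnt sf p₁ = 1)
    (hd₂ : u₂.toListP = l₂.map pInj ++ p₂ :: r₂.map pInj) (hp₂ : OpP.cnt sf p₂ = 1)
    {m : List (OpP X Ω ar)}
    (hm : l₂ = l₁ ++ ((OpP.subst w₁ p₁).toListP ++ m))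
    (hr : r₁ = m ++ ((OpP.subst w₂ p₂).toListP ++ r₂)) :
    Rel u₁ w₁ u₂ w₂ := by
  refine Or.inl ⟨fun z => ctx l₁ (.single p₁) (m ++ ((OpP.subst z p₂).toListP ++ r₂)),
    fun z' => ctx (l₁ ++ ((OpP.subst z' p₁).toListP ++ m)) (.single p₂) r₂,
    ?_, ?_, ?_, ?_, ?_⟩
  · intro z; show starCt _ = 1; rw [starCt_ctx]; exact hp₁
  · intro z'; show starCt _ = 1; rw [starCt_ctx]; exact hp₂
  · intro z z'
    apply toListP_inj
    rw [substW_ctx, substW_ctx, substL_single, substL_single]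
    simp [List.append_assoc]
  · intro z'
    apply toListP_inj
    rw [substW_decomp hd₁, substW_ctx, substL_single, hr]
    simp [List.append_assoc]
  · intro z
    apply toListP_inj
    rw [substW_decomp hd₂, substW_ctx, substL_single, hm]
    simp [List.append_assoc]

theorem caseIncl
    (hd₁ : u₁.toListP = l₁.map pInj ++ p₁ :: r₁.map pInj)
    (hp₁top : p₁ = OpP.letter none)
    (hd₂ : u₂.toListP = l₂.map pInj ++ p₂ :: r₂.map pInj) (hp₂ : OpP.cnt sf p₂ = 1)
    {b c : List (OpP X Ω ar)}
    (hw : w₁.toListP = b ++ ((OpP.subst w₂ p₂).toListP ++ c))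
    (hl : l₂ = l₁ ++ b) (hr : r₂ = c ++ r₁) :
    Rel u₁ w₁ u₂ w₂ := by
  subst hp₁top
  refine Or.inr (Or.inl ⟨ctx b (.single p₂) c, ?_, ?_, ?_⟩)
  · show starCt _ = 1; rw [starCt_ctx]; exact hp₂
  · apply toListP_inj
    rw [substW_ctx, substL_single, hw, List.append_assoc]
  · intro z
    apply toListP_inj
    rw [substW_decomp hd₂, substW_decomp hd₁, subst_letter_none, substW_ctx,
      substL_single, hl, hr]
    simp [List.append_assoc]

theorem caseInter
    (hd₁ : u₁.toListP = l₁.map pInj ++ p₁ :: r₁.map pInj)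
    (hp₁top : p₁ = OpP.letter none)
    (hd₂ : u₂.toListP = l₂.map pInj ++ p₂ :: r₂.map pInj)
    (hp₂top : p₂ = OpP.letter none)
    {bL aL : List (OpP X Ω ar)} (hbne : bL ≠ []) (hane : aL ≠ [])
    (hl : l₂ = l₁ ++ bL) (hr : r₁ = aL ++ r₂)
    (hS : w₁.toListP ++ aL = bL ++ w₂.toListP)
    (hlen : aL.length < w₂.toListP.length) :
    Rel u₁ w₁ u₂ w₂ := by
  subst hp₁top; subst hp₂top
  obtain ⟨pa, ta, rfl⟩ := List.exists_cons_of_ne_nil hane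
  obtain ⟨pb, tb, rfl⟩ := List.exists_cons_of_ne_nil hbne
  refine Or.inr (Or.inr (Or.inr (Or.inl
    ⟨wOf pa ta, wOf pb tb, ctx l₁ starW r₂, ?_, ?_, ?_, ?_, ?_⟩)))
  · show starCt _ = 1; rw [starCt_ctx]; rfl
  · apply toListP_inj
    rw [mul_toListP, mul_toListP, wOf_toListP, wOf_toListP]
    exact hS
  · show (w₁ * wOf pa ta).toListP.length < w₁.toListP.length + w₂.toListP.length
    rw [mul_toListP, wOf_toListP, List.length_append]
    simp only [List.length_cons] at hlen ⊢
    omega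
  · intro z
    apply toListP_inj
    rw [substW_decomp hd₁, subst_letter_none, substW_ctx, substL_starW,
      mul_toListP, wOf_toListP, hr]
    simp [List.append_assoc]
  · intro z
    apply toListP_inj
    rw [substW_decomp hd₂, subst_letter_none, substW_ctx, substL_starW,
      mul_toListP, wOf_toListP, hl]
    simp [List.append_assoc]


theorem starCt_single_node {δ : Ω} (a : OpArgs (Option X) Ω ar (ar δ)) :
    starCt (OpW.single (OpP.node δ a)) = OpArgs.cntA sf a := rfl

theorem caseArgsDisj {δ : Ω} {args₁ args₂ : OpArgs (Option X) Ω ar (ar δ)}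
    (hd₁ : u₁.toListP = l₁.map pInj ++ OpP.node δ args₁ :: r₁.map pInj)
    (hd₂ : u₂.toListP = l₁.map pInj ++ OpP.node δ args₂ :: r₁.map pInj)
    {A B C D E : List (OpW X Ω ar)} {v₁ v₂ : OpW (Option X) Ω ar}
    (hA : argsToList args₁ = A.map wInj ++ v₁ :: B.map wInj) (hv₁ : IsStar v₁)
    (hC : argsToList args₂ = C.map wInj ++ v₂ :: D.map wInj) (hv₂ : IsStar v₂)
    (hCE : C = A ++ OpW.subst w₁ v₁ :: E) (hBE : B = E ++ OpW.subst w₂ v₂ :: D) :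
    Rel u₁ w₁ u₂ w₂ := by
  have hlen1 := argsToList_length args₁
  rw [hA] at hlen1
  simp only [List.length_append, List.length_map, List.length_cons] at hlen1
  have hlenB : B.length = E.length + D.length + 1 := by rw [hBE]; simp; omega
  have hL₁ : ∀ z : OpW X Ω ar,
      (A.map wInj ++ v₁ :: (E.map wInj ++ wInj (OpW.subst z v₂) :: D.map wInj)).length
        = ar δ := by
    intro z; simp; omega
  have hL₂ : ∀ z' : OpW X Ω ar,
      (A.map wInj ++ wInj (OpW.subst z' v₁) :: (E.map wInj ++ v₂ :: D.map wInj)).length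
        = ar δ := by
    intro z'; simp; omega
  refine Or.inl ⟨fun z => ctx l₁ (.single (.node δ (argsMk _ (hL₁ z)))) r₁,
    fun z' => ctx l₁ (.single (.node δ (argsMk _ (hL₂ z')))) r₁, ?_, ?_, ?_, ?_, ?_⟩
  · intro z
    show starCt _ = 1
    rw [starCt_ctx, starCt_single_node, cntA_toList, argsToList_mk]
    simp only [List.map_append, List.map_cons, List.sum_append, List.sum_cons,
      sum_cnt_map_wInj, cnt_wInj]
    have : OpW.cnt sf v₁ = 1 := hv₁
    omega
  · intro z'
    show starCt _ = 1
    rw [starCt_ctx, starCt_single_node, cntA_toList, argsToList_mk]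
    simp only [List.map_append, List.map_cons, List.sum_append, List.sum_cons,
      sum_cnt_map_wInj, cnt_wInj]
    have : OpW.cnt sf v₂ = 1 := hv₂
    omega
  · intro z z'
    apply toListP_inj
    rw [substW_ctx_node, substW_ctx_node]
    have harg : OpArgs.substA z' (argsMk _ (hL₁ z)) = OpArgs.substA z (argsMk _ (hL₂ z')) := by
      apply argsToList_inj
      rw [substA_argsMk, substA_argsMk]
      simp [List.map_map, Function.comp_def, subst_wInj]
    rw [harg]
  · intro z'
    apply toListP_inj
    rw [substW_decomp hd₁, subst_node, substW_ctx_node]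
    have harg : OpArgs.substA z' args₁ = OpArgs.substA z' (argsMk _ (hL₁ w₂)) := by
      apply argsToList_inj
      rw [substA_argsMk, substA_toList, hA, hBE]
      simp [List.map_map, Function.comp_def, subst_wInj]
    rw [harg]
    simp [OpW.toListP]
  · intro z
    apply toListP_inj
    rw [substW_decomp hd₂, subst_node, substW_ctx_node]
    have harg : OpArgs.substA z args₂ = OpArgs.substA z (argsMk _ (hL₂ w₁)) := by
      apply argsToList_inj
      rw [substA_argsMk, substA_toList, hC, hCE]
      simp [List.map_map, Function.comp_def, subst_wInj]
    rw [harg]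
    simp [OpW.toListP]

end Cases


theorem split_of_le {α : Type*} {l₁ t₁ l₂ t₂ : List α} (h : l₁ ++ t₁ = l₂ ++ t₂)
    (hle : l₁.length ≤ l₂.length) : ∃ m, l₂ = l₁ ++ m ∧ t₁ = m ++ t₂ := by
  rcases List.append_eq_append_iff.mp h with ⟨m, hm1, hm2⟩ | ⟨m, hm1, hm2⟩
  · exact ⟨m, hm1, hm2⟩
  · have hm0 : m = [] := by
      have := congrArg List.length hm1
      simp only [List.length_append] at this
      rw [← List.length_eq_zero_iff]
      omega
    subst hm0
    exact ⟨[], by simpa using hm1.symm, by simpa using hm2.symm⟩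

theorem relCore (u₁ u₂ : OpW (Option X) Ω ar) (w₁ w₂ : OpW X Ω ar)
    {l₁ r₁ l₂ r₂ : List (OpP X Ω ar)} {p₁ p₂ : OpP (Option X) Ω ar}
    (hN : ∀ (a b : OpW (Option X) Ω ar) (wa wb : OpW X Ω ar),
      OpW.opCnt one a + OpW.opCnt one b < OpW.opCnt one u₁ + OpW.opCnt one u₂ →
      IsStar a → IsStar b → substW a wa = substW b wb → Rel a wa b wb)
    (hd₁ : u₁.toListP = l₁.map pInj ++ p₁ :: r₁.map pInj) (hp₁ : OpP.cnt sf p₁ = 1)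
    (hd₂ : u₂.toListP = l₂.map pInj ++ p₂ :: r₂.map pInj) (hp₂ : OpP.cnt sf p₂ = 1)
    (heq : substW u₁ w₁ = substW u₂ w₂)
    (hle : l₁.length ≤ l₂.length) : Rel u₁ w₁ u₂ w₂ := by
  have e₁ := substW_decomp hd₁ w₁
  have e₂ := substW_decomp hd₂ w₂
  rw [heq, e₂] at e₁
  obtain ⟨m, hm, hmt⟩ := split_of_le e₁.symm hle
  have hmlen : l₂.length = l₁.length + m.length := by
    have := congrArg List.length hm; simpa [List.length_append] using this
  by_cases hA : l₁.length + (OpP.subst w₁ p₁).toListP.length ≤ l₂.length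
  · -- the two occurrences are disjoint
    obtain ⟨m', hm', hr'⟩ := split_of_le hmt (by omega)
    exact caseDisj hd₁ hp₁ hd₂ hp₂ (m := m') (by rw [hm, hm']) hr'
  · push_neg at hA
    -- the second occurrence starts inside the block of the first
    obtain ⟨s', hs', hst⟩ := split_of_le hmt.symm (by omega)
    have hs'len : (OpP.subst w₁ p₁).toListP.length = m.length + s'.length := by
      have := congrArg List.length hs'; simpa [List.length_append] using this
    have hS₂ne : (OpP.subst w₂ p₂).toListP ≠ [] := toListP_ne_nil _
    have hS₂pos : 0 < (OpP.subst w₂ p₂).toListP.length := List.length_pos_iff.mpr hS₂ne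
    rcases starPrime_cases hp₁ with hp₁top | ⟨δ₁, args₁, hnode₁, hargs₁⟩
    · -- the first star is at word level
      by_cases hB : l₂.length + (OpP.subst w₂ p₂).toListP.length
          ≤ l₁.length + (OpP.subst w₁ p₁).toListP.length
      · -- w₂ occurs inside w₁
        obtain ⟨c, hc, hr₂⟩ := split_of_le hst (by omega)
        refine caseIncl hd₁ hp₁top hd₂ hp₂ (b := m) (c := c) ?_ hm hr₂
        have h1 : (OpP.subst w₁ p₁).toListP = w₁.toListP := by rw [hp₁top]; rfl
        rw [← h1, hs', hc]
      · push_neg at hB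
        rcases starPrime_cases hp₂ with hp₂top | ⟨δ₂, args₂, hnode₂, hargs₂⟩
        · by_cases hm0 : m = []
          · -- w₁ occurs inside w₂ (same starting position)
            subst hm0
            have hl₂ : l₂ = l₁ := by simpa using hm
            have hs'' : s' = (OpP.subst w₁ p₁).toListP := by simpa using hs'.symm
            rw [hs''] at hst
            have hlen12 : l₂.length = l₁.length := by rw [hl₂]
            obtain ⟨c, hc, hr₁⟩ := split_of_le hst.symm (by omega)
            refine Rel.swap (caseIncl hd₂ hp₂top hd₁ hp₁ (b := []) (c := c) ?_ ?_ ?_)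
            · have h2 : (OpP.subst w₂ p₂).toListP = w₂.toListP := by rw [hp₂top]; rfl
              rw [← h2, hc]; rfl
            · rw [hl₂]; simp
            · exact hr₁
          · -- proper intersection
            obtain ⟨aL, haL, hr₁⟩ := split_of_le hst.symm (by omega)
            have haLlen : (OpP.subst w₂ p₂).toListP.length = s'.length + aL.length := by
              have := congrArg List.length haL; simpa [List.length_append] using this
            have hs'ne : s' ≠ [] := by
              rw [← List.length_pos_iff, ← Nat.not_le, Nat.le_zero]
              intro h0
              have hmm : m.length < (OpP.subst w₁ p₁).toListP.length := by omega
              omega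
            have hane : aL ≠ [] := by
              rw [← List.length_pos_iff, ← Nat.not_le, Nat.le_zero]
              intro h0
              omega
            refine caseInter hd₁ hp₁top hd₂ hp₂top (bL := m) (aL := aL) hm0 hane hm hr₁
              ?_ ?_
            · have h1 : (OpP.subst w₁ p₁).toListP = w₁.toListP := by rw [hp₁top]; rfl
              have h2 : (OpP.subst w₂ p₂).toListP = w₂.toListP := by rw [hp₂top]; rfl
              rw [← h1, ← h2, hs', haL, List.append_assoc]
            · have h2 : (OpP.subst w₂ p₂).toListP = w₂.toListP := by rw [hp₂top]; rfl
              rw [← h2]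
              have : 0 < s'.length := List.length_pos_iff.mpr hs'ne
              omega
        · -- the second star is deep but sticks out: impossible
          exfalso
          have h2 : (OpP.subst w₂ p₂).toListP.length = 1 := by
            rw [hnode₂, subst_node]; rfl
          omega
    · -- the first star is deep
      subst hnode₁
      have hS₁ : (OpP.subst w₁ (OpP.node δ₁ args₁)).toListP
          = [OpP.node δ₁ (OpArgs.substA w₁ args₁)] := by rw [subst_node]; rfl
      have hS₁len : (OpP.subst w₁ (OpP.node δ₁ args₁)).toListP.length = 1 := by
        rw [hS₁]; rfl
      have hm0 : m = [] := by
        rw [← List.length_eq_zero_iff]; omega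
      subst hm0
      have hl₂ : l₂ = l₁ := by simpa using hm
      subst hl₂
      have hs'' : s' = [OpP.node δ₁ (OpArgs.substA w₁ args₁)] := by
        rw [← hS₁]; simpa using hs'.symm
      rw [hs''] at hst
      rcases starPrime_cases hp₂ with hp₂top | ⟨δ₂, args₂, hnode₂, hargs₂⟩
      · -- w₁ occurs (deeply) inside w₂
        obtain ⟨c, hc, hr₁⟩ := split_of_le hst.symm
          (by simp only [List.length_singleton]; omega)
        refine Rel.swap (caseIncl hd₂ hp₂top hd₁ hp₁ (b := []) (c := c) ?_ ?_ ?_)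
        · have h2 : (OpP.subst w₂ p₂).toListP = w₂.toListP := by rw [hp₂top]; rfl
          rw [← h2, hc, hS₁]; rfl
        · simp
        · exact hr₁
      · -- both stars are deep at the same position
        subst hnode₂
        have hS₂ : (OpP.subst w₂ (OpP.node δ₂ args₂)).toListP
            = [OpP.node δ₂ (OpArgs.substA w₂ args₂)] := by rw [subst_node]; rfl
        rw [hS₂] at hst
        have hnodeEq : OpP.node δ₂ (OpArgs.substA w₂ args₂)
            = OpP.node δ₁ (OpArgs.substA w₁ args₁) := by
          have := hst
          simp only [List.singleton_append, List.cons.injEq] at this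
          exact this.1
        have hr₂r₁ : r₂ = r₁ := by
          have := hst
          simp only [List.singleton_append, List.cons.injEq] at this
          exact this.2
        subst hr₂r₁
        have hδ : δ₂ = δ₁ := by injection hnodeEq
        subst hδ
        have hargsEq : OpArgs.substA w₂ args₂ = OpArgs.substA w₁ args₁ := by
          have h7 := hnodeEq
          simp only [OpP.node.injEq, heq_eq_eq, true_and] at h7
          exact h7
        obtain ⟨A, v₁, B, hA, hv₁⟩ := args_star_decomp args₁ hargs₁
        obtain ⟨C, v₂, D, hC, hv₂⟩ := args_star_decomp args₂ hargs₂
        have key : A ++ OpW.subst w₁ v₁ :: B = C ++ OpW.subst w₂ v₂ :: D := by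
          have h3 := congrArg argsToList hargsEq.symm
          rw [substA_toList, substA_toList, hA, hC] at h3
          simpa [List.map_map, Function.comp_def, subst_wInj] using h3
        -- measure facts
        have hmem₁ : OpP.node δ₂ args₁ ∈ u₁.toListP := by rw [hd₁]; simp
        have hmem₂ : OpP.node δ₂ args₂ ∈ u₂.toListP := by rw [hd₂]; simp
        have hv₁mem : v₁ ∈ argsToList args₁ := by rw [hA]; simp
        have hv₂mem : v₂ ∈ argsToList args₂ := by rw [hC]; simp
        have hms₁ : OpW.opCnt one v₁ < OpW.opCnt one u₁ := by
          have h4 := opCnt_mem_args hv₁mem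
          have h5 := opCnt_mem_toListP hmem₁
          have h6 : OpP.opCnt one (OpP.node δ₂ args₁)
              = 1 + OpArgs.opCntA one args₁ := rfl
          omega
        have hms₂ : OpW.opCnt one v₂ < OpW.opCnt one u₂ := by
          have h4 := opCnt_mem_args hv₂mem
          have h5 := opCnt_mem_toListP hmem₂
          have h6 : OpP.opCnt one (OpP.node δ₂ args₂)
              = 1 + OpArgs.opCntA one args₂ := rfl
          omega
        rcases lt_trichotomy A.length C.length with hAC | hAC | hAC
        · -- stars in different argument slots
          obtain ⟨m₀, hm₀, hm₀t⟩ := split_of_le key (le_of_lt hAC)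
          have hm₀ne : m₀ ≠ [] := by
            intro h0
            rw [h0] at hm₀
            have := congrArg List.length hm₀
            simp at this
            omega
          obtain ⟨y, E, rfl⟩ := List.exists_cons_of_ne_nil hm₀ne
          have hy : y = OpW.subst w₁ v₁ ∧ B = E ++ OpW.subst w₂ v₂ :: D := by
            have := hm₀t
            simp only [List.cons_append, List.cons.injEq] at this
            exact ⟨this.1.symm, this.2⟩
          rw [hy.1] at hm₀
          exact caseArgsDisj hd₁ hd₂ hA hv₁ hC hv₂ hm₀ hy.2
        · -- stars in the same argument slot: recurse and lift
          obtain ⟨hACeq, hyBD⟩ := List.append_inj key (by simpa using hAC)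
          have hy : OpW.subst w₁ v₁ = OpW.subst w₂ v₂ ∧ B = D := by
            simpa using hyBD
          have hrel : Rel v₁ w₁ v₂ w₂ :=
            hN v₁ v₂ w₁ w₂ (by omega) hv₁ hv₂ hy.1
          -- lift through the common context
          have hU₀len : (A.map wInj ++ starW :: B.map wInj).length = ar δ₂ := by
            have := argsToList_length args₁
            rw [hA] at this
            simpa using this
          refine Rel.lift (ctx l₂ (.single (.node δ₂ (argsMk _ hU₀len))) r₂) ?_ ?_ ?_ hrel
          · show starCt _ = 1
            rw [starCt_ctx, starCt_single_node, cntA_toList, argsToList_mk]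
            simp only [List.map_append, List.map_cons, List.sum_append, List.sum_cons,
              sum_cnt_map_wInj]
            rfl
          · intro z
            apply toListP_inj
            rw [substW_decomp hd₁, subst_node, substW_ctx_node]
            have harg : OpArgs.substA z args₁
                = OpArgs.substA (substW v₁ z) (argsMk _ hU₀len) := by
              apply argsToList_inj
              rw [substA_argsMk, substA_toList, hA]
              simp [List.map_map, Function.comp_def, subst_wInj, subst_starW, substW_def]
            rw [harg]
            simp [OpW.toListP]
          · intro z
            apply toListP_inj
            rw [substW_decomp hd₂, subst_node, substW_ctx_node]
            have harg : OpArgs.substA z args₂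
                = OpArgs.substA (substW v₂ z) (argsMk _ hU₀len) := by
              apply argsToList_inj
              rw [substA_argsMk, substA_toList, hC, ← hACeq, ← hy.2]
              simp [List.map_map, Function.comp_def, subst_wInj, subst_starW, substW_def]
            rw [harg]
            simp [OpW.toListP]
        · -- stars in different argument slots (other order)
          obtain ⟨m₀, hm₀, hm₀t⟩ := split_of_le key.symm (le_of_lt hAC)
          have hm₀ne : m₀ ≠ [] := by
            intro h0
            rw [h0] at hm₀
            have := congrArg List.length hm₀
            simp at this
            omega
          obtain ⟨y, E, rfl⟩ := List.exists_cons_of_ne_nil hm₀ne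
          have hy : y = OpW.subst w₂ v₂ ∧ D = E ++ OpW.subst w₁ v₁ :: B := by
            have := hm₀t
            simp only [List.cons_append, List.cons.injEq] at this
            exact ⟨this.1.symm, this.2⟩
          rw [hy.1] at hm₀
          exact Rel.swap (caseArgsDisj hd₂ hd₁ hC hv₂ hA hv₁ hm₀ hy.2)

theorem relMain (N : ℕ) : ∀ (u₁ u₂ : OpW (Option X) Ω ar) (w₁ w₂ : OpW X Ω ar),
    OpW.opCnt one u₁ + OpW.opCnt one u₂ ≤ N → IsStar u₁ → IsStar u₂ →
    substW u₁ w₁ = substW u₂ w₂ → Rel u₁ w₁ u₂ w₂ := by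
  induction N using Nat.strong_induction_on with
  | _ N IH =>
    intro u₁ u₂ w₁ w₂ hN h₁ h₂ heq
    obtain ⟨l₁, p₁, r₁, hd₁, hp₁⟩ := star_decomp h₁
    obtain ⟨l₂, p₂, r₂, hd₂, hp₂⟩ := star_decomp h₂
    have hrec : ∀ (a b : OpW (Option X) Ω ar) (wa wb : OpW X Ω ar),
        OpW.opCnt one a + OpW.opCnt one b < OpW.opCnt one u₁ + OpW.opCnt one u₂ →
        IsStar a → IsStar b → substW a wa = substW b wb → Rel a wa b wb := by
      intro a b wa wb hlt ha hb he
      exact IH (OpW.opCnt one a + OpW.opCnt one b) (by omega) a b wa wb le_rfl ha hb he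
    rcases le_total l₁.length l₂.length with hle | hle
    · exact relCore u₁ u₂ w₁ w₂ hrec hd₁ hp₁ hd₂ hp₂ heq hle
    · exact Rel.swap (relCore u₂ u₁ w₂ w₁ (fun a b wa wb hlt => hrec a b wa wb (by omega))
        hd₂ hp₂ hd₁ hp₁ heq.symm hle)

end Words


/-! ### Algebraic lemmas -/

section Alg

variable {K : Type w} [CommRing K]

theorem substPoly_eq_mapDomain (u : OpW (Option X) Ω ar) (s : OpAlg K X Ω ar) :
    substPoly u s = MonoidAlgebra.ofCoeff (Finsupp.mapDomain (substW u) s.coeff) := by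
  simp [substPoly, Finsupp.mapDomain]

theorem substPoly_congr {u u' : OpW (Option X) Ω ar} (h : ∀ z, substW u z = substW u' z)
    (s : OpAlg K X Ω ar) : substPoly u s = substPoly u' s := by
  rw [substPoly_eq_mapDomain, substPoly_eq_mapDomain]
  exact congrArg _ (Finsupp.mapDomain_congr (fun z _ => h z))

theorem substPoly_zero (u : OpW (Option X) Ω ar) :
    substPoly u (0 : OpAlg K X Ω ar) = 0 := by
  rw [substPoly_eq_mapDomain]; simp

theorem substPoly_add (u : OpW (Option X) Ω ar) (s t : OpAlg K X Ω ar) :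
    substPoly u (s + t) = substPoly u s + substPoly u t := by
  rw [substPoly_eq_mapDomain, substPoly_eq_mapDomain, substPoly_eq_mapDomain,
    MonoidAlgebra.coeff_add, Finsupp.mapDomain_add]; rfl

theorem substPoly_smul (u : OpW (Option X) Ω ar) (c : K) (s : OpAlg K X Ω ar) :
    substPoly u (c • s) = c • substPoly u s := by
  rw [substPoly_eq_mapDomain, substPoly_eq_mapDomain, MonoidAlgebra.coeff_smul,
    Finsupp.mapDomain_smul]; rfl

theorem substPoly_sub (u : OpW (Option X) Ω ar) (s t : OpAlg K X Ω ar) :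
    substPoly u (s - t) = substPoly u s - substPoly u t := by
  have h := substPoly_add u (s - t) t
  rw [sub_add_cancel] at h
  rw [h]; abel

theorem substPoly_comp (U v : OpW (Option X) Ω ar) (s : OpAlg K X Ω ar) :
    substPoly U (substPoly v s) = substPoly (wPlug v U) s := by
  simp only [substPoly_eq_mapDomain, MonoidAlgebra.coeff_ofCoeff]
  have hfun : substW (wPlug v U) = substW U ∘ substW v := funext (substW_wPlug v U)
  rw [hfun, Finsupp.mapDomain_comp]

theorem mul_single_one (s : OpAlg K X Ω ar) (a : OpW X Ω ar) :
    s * MonoidAlgebra.single a 1 = MonoidAlgebra.ofCoeff (Finsupp.mapDomain (· * a) s.coeff) := by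
  rw [MonoidAlgebra.mul_def, Finsupp.mapDomain, MonoidAlgebra.ofCoeff_finsuppSum]
  congr 1
  funext z c
  rw [MonoidAlgebra.coeff_single, Finsupp.sum_single_index (by simp)]
  simp

theorem single_one_mul (s : OpAlg K X Ω ar) (b : OpW X Ω ar) :
    MonoidAlgebra.single b 1 * s = MonoidAlgebra.ofCoeff (Finsupp.mapDomain (b * ·) s.coeff) := by
  rw [MonoidAlgebra.mul_def, MonoidAlgebra.coeff_single, Finsupp.sum_single_index (by simp),
    Finsupp.mapDomain, MonoidAlgebra.ofCoeff_finsuppSum]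
  congr 1
  funext z c
  simp

variable (lt : OpW X Ω ar → OpW X Ω ar → Prop)

theorem hasLead_unique (hw : IsWellOrder (OpW X Ω ar) lt) {f : OpAlg K X Ω ar}
    {a b : OpW X Ω ar} (ha : HasLead lt f a) (hb : HasLead lt f b) : a = b := by
  by_contra hne
  have h1 := ha.2 b hb.1 (fun h => hne h.symm)
  have h2 := hb.2 a ha.1 hne
  haveI := hw
  exact absurd (trans_of lt h2 h1) (irrefl_of lt a)

theorem trivialMod_subst
    (hmono : ∀ u : OpW (Option X) Ω ar, IsStar u →
      ∀ w v : OpW X Ω ar, lt v w → lt (substW u v) (substW u w))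
    {S : Set (OpAlg K X Ω ar)} {w' : OpW X Ω ar} {p : OpAlg K X Ω ar}
    (U : OpW (Option X) Ω ar) (hU : IsStar U)
    (h : TrivialMod lt S w' p) :
    TrivialMod lt S (substW U w') (substPoly U p) := by
  unfold TrivialMod at h ⊢
  induction h using Submodule.span_induction with
  | mem q hq =>
      obtain ⟨v, t, ws, hv, ht, hlead, hlt, rfl⟩ := hq
      apply Submodule.subset_span
      refine ⟨wPlug v U, t, ws, isStar_wPlug hv hU, ht, hlead, ?_, substPoly_comp U v t⟩
      rw [substW_wPlug]
      exact hmono U hU _ _ hlt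
  | zero => rw [substPoly_zero]; exact Submodule.zero_mem _
  | add x y hx hy ihx ihy => rw [substPoly_add]; exact Submodule.add_mem _ ihx ihy
  | smul c x hx ih => rw [substPoly_smul]; exact Submodule.smul_mem _ c ih

theorem trivial_disj
    (hmono : ∀ u : OpW (Option X) Ω ar, IsStar u →
      ∀ w v : OpW X Ω ar, lt v w → lt (substW u v) (substW u w))
    {S : Set (OpAlg K X Ω ar)} {s₁ s₂ : OpAlg K X Ω ar}
    (hs₁ : s₁ ∈ S) (hs₂ : s₂ ∈ S) {w₁ w₂ w : OpW X Ω ar}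
    (hl₁ : HasLead lt s₁ w₁) (hl₂ : HasLead lt s₂ w₂)
    (hm₁ : s₁.coeff w₁ = 1) (hm₂ : s₂.coeff w₂ = 1)
    {u₁ u₂ : OpW (Option X) Ω ar}
    (c₁ c₂ : OpW X Ω ar → OpW (Option X) Ω ar)
    (hc₁ : ∀ z, IsStar (c₁ z)) (hc₂ : ∀ z, IsStar (c₂ z))
    (hsw : ∀ z z', substW (c₁ z) z' = substW (c₂ z') z)
    (hu₁ : ∀ z', substW u₁ z' = substW (c₁ w₂) z')
    (hu₂ : ∀ z, substW u₂ z = substW (c₂ w₁) z)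
    (hw1 : substW u₁ w₁ = w) (hw2 : substW u₂ w₂ = w) :
    TrivialMod lt S w (substPoly u₁ s₁ - substPoly u₂ s₂) := by
  classical
  have expand : ∀ (c : OpW X Ω ar → OpW (Option X) Ω ar) (s : OpAlg K X Ω ar) (z₀ : OpW X Ω ar),
      substPoly (c z₀) s = ∑ z ∈ s.coeff.support, MonoidAlgebra.single (substW (c z₀) z) (s.coeff z) := by
    intro c s z₀
    rfl
  have key : (∑ z ∈ s₂.coeff.support, s₂.coeff z • substPoly (c₁ z) s₁)
      = ∑ z' ∈ s₁.coeff.support, s₁.coeff z' • substPoly (c₂ z') s₂ := by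
    simp only [expand, Finset.smul_sum]
    rw [Finset.sum_comm]
    refine Finset.sum_congr rfl fun z' _ => Finset.sum_congr rfl fun z _ => ?_
    rw [MonoidAlgebra.smul_single, MonoidAlgebra.smul_single, smul_eq_mul, smul_eq_mul, mul_comm, hsw]
  have split1 : substPoly (c₁ w₂) s₁
      = (∑ z ∈ s₂.coeff.support, s₂.coeff z • substPoly (c₁ z) s₁)
        - ∑ z ∈ s₂.coeff.support.erase w₂, s₂.coeff z • substPoly (c₁ z) s₁ := by
    rw [← Finset.add_sum_erase _ _ hl₂.1, hm₂, one_smul]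
    abel
  have split2 : substPoly (c₂ w₁) s₂
      = (∑ z' ∈ s₁.coeff.support, s₁.coeff z' • substPoly (c₂ z') s₂)
        - ∑ z' ∈ s₁.coeff.support.erase w₁, s₁.coeff z' • substPoly (c₂ z') s₂ := by
    rw [← Finset.add_sum_erase _ _ hl₁.1, hm₁, one_smul]
    abel
  have main : substPoly u₁ s₁ - substPoly u₂ s₂
      = (∑ z' ∈ s₁.coeff.support.erase w₁, s₁.coeff z' • substPoly (c₂ z') s₂)
        - ∑ z ∈ s₂.coeff.support.erase w₂, s₂.coeff z • substPoly (c₁ z) s₁ := by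
    rw [substPoly_congr hu₁ s₁, substPoly_congr hu₂ s₂, split1, split2, key]
    abel
  rw [TrivialMod, main]
  refine Submodule.sub_mem _ ?_ ?_
  · refine Submodule.sum_mem _ fun z' hz' => Submodule.smul_mem _ _ (Submodule.subset_span ?_)
    refine ⟨c₂ z', s₂, w₂, hc₂ z', hs₂, hl₂, ?_, rfl⟩
    rw [← hsw w₂ z']
    have hlt : lt z' w₁ := hl₁.2 z' (Finset.mem_of_mem_erase hz') (Finset.ne_of_mem_erase hz')
    have := hmono (c₁ w₂) (hc₁ w₂) w₁ z' hlt
    rwa [← hu₁ w₁, hw1] at this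
  · refine Submodule.sum_mem _ fun z hz => Submodule.smul_mem _ _ (Submodule.subset_span ?_)
    refine ⟨c₁ z, s₁, w₁, hc₁ z, hs₁, hl₁, ?_, rfl⟩
    rw [hsw z w₁]
    have hlt : lt z w₂ := hl₂.2 z (Finset.mem_of_mem_erase hz) (Finset.ne_of_mem_erase hz)
    have := hmono (c₂ w₁) (hc₂ w₁) w₂ z hlt
    rwa [← hu₂ w₂, hw2] at this

end Alg

end GSB

/-- **Lemma 3.3** (Bokut–Chen–Qiu). Let `>` (here `lt`, read `lt v w` as `v < w`) be a
monomial ordering on `𝔖(X)` (a well order such that `v < w` implies `u|_v < u|_w` for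
every `⋆`-`Ω`-word `u`), and let `S` be a Gröbner–Shirshov basis in `K⟨X; Ω⟩`.
If `u₁, u₂` are `⋆`-`Ω`-words, `s₁, s₂ ∈ S` have leading words `w₁, w₂`, and
`w = u₁|_{w₁} = u₂|_{w₂}`, then `u₁|_{s₁} ≡ u₂|_{s₂} mod (S, w)`, i.e.
`u₁|_{s₁} - u₂|_{s₂}` is a `K`-linear combination `Σᵢ αᵢ vᵢ|_{tᵢ}` with `tᵢ ∈ S` and
`vᵢ|_{t̄ᵢ} < w`. -/
theorem lemma_3_3 {K : Type*} [CommRing K] {X : Type u} {Ω : Type v} {ar : Ω → ℕ}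
    (lt : OpW X Ω ar → OpW X Ω ar → Prop)
    (hwell : IsWellOrder (OpW X Ω ar) lt)
    (hmono : ∀ u : OpW (Option X) Ω ar, IsStar u →
      ∀ w v : OpW X Ω ar, lt v w → lt (substW u v) (substW u w))
    (S : Set (OpAlg K X Ω ar)) (hS : IsGSB lt S)
    (u₁ u₂ : OpW (Option X) Ω ar) (hu₁ : IsStar u₁) (hu₂ : IsStar u₂)
    (s₁ s₂ : OpAlg K X Ω ar) (hs₁ : s₁ ∈ S) (hs₂ : s₂ ∈ S)
    (w₁ w₂ : OpW X Ω ar) (hl₁ : HasLead lt s₁ w₁) (hl₂ : HasLead lt s₂ w₂)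
    (w : OpW X Ω ar) (hw₁ : substW u₁ w₁ = w) (hw₂ : substW u₂ w₂ = w) :
    TrivialMod lt S w (substPoly u₁ s₁ - substPoly u₂ s₂) := by
  classical
  have heq : substW u₁ w₁ = substW u₂ w₂ := hw₁.trans hw₂.symm
  obtain ⟨wa, hwa, hma⟩ := hS.1 s₁ hs₁
  obtain ⟨wb, hwb, hmb⟩ := hS.1 s₂ hs₂
  have hm₁ : s₁.coeff w₁ = 1 := by rwa [GSB.hasLead_unique lt hwell hl₁ hwa]
  have hm₂ : s₂.coeff w₂ = 1 := by rwa [GSB.hasLead_unique lt hwell hl₂ hwb]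
  have hrel := GSB.relMain (OpW.opCnt GSB.one u₁ + OpW.opCnt GSB.one u₂) u₁ u₂ w₁ w₂
    le_rfl hu₁ hu₂ heq
  rcases hrel with ⟨c₁, c₂, hc₁, hc₂, hsw, hq₁, hq₂⟩ | ⟨v, hv, hvw, hpt⟩ | ⟨v, hv, hvw, hpt⟩ |
    ⟨a, b, U, hU, hab, hbre, hp1, hp2⟩ | ⟨a, b, U, hU, hab, hbre, hp1, hp2⟩
  · exact GSB.trivial_disj lt hmono hs₁ hs₂ hl₁ hl₂ hm₁ hm₂ c₁ c₂ hc₁ hc₂ hsw hq₁ hq₂ hw₁ hw₂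
  · -- the occurrence of w₂ is inside w₁ : inclusion composition
    have hcomp := hS.2.2 s₁ hs₁ s₂ hs₂ w₁ w₂ v hl₁ hl₂ hv hvw.symm
    have htr := GSB.trivialMod_subst lt hmono u₁ hu₁ hcomp
    rw [hw₁] at htr
    have e : substPoly u₁ (s₁ - substPoly v s₂) = substPoly u₁ s₁ - substPoly u₂ s₂ := by
      rw [GSB.substPoly_sub, GSB.substPoly_comp]
      congr 1
      exact (GSB.substPoly_congr
        (fun z => (GSB.substW_wPlug v u₁ z).trans (hpt z).symm) s₂)
    rwa [e] at htr
  · -- the occurrence of w₁ is inside w₂ : inclusion composition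
    have hcomp := hS.2.2 s₂ hs₂ s₁ hs₁ w₂ w₁ v hl₂ hl₁ hv hvw.symm
    have htr := GSB.trivialMod_subst lt hmono u₂ hu₂ hcomp
    rw [hw₂] at htr
    have e : substPoly u₂ (s₂ - substPoly v s₁) = substPoly u₂ s₂ - substPoly u₁ s₁ := by
      rw [GSB.substPoly_sub, GSB.substPoly_comp]
      congr 1
      exact (GSB.substPoly_congr
        (fun z => (GSB.substW_wPlug v u₂ z).trans (hpt z).symm) s₁)
    rw [e] at htr
    unfold TrivialMod at htr ⊢
    have := Submodule.neg_mem _ htr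
    rwa [neg_sub] at this
  · -- proper overlap : intersection composition
    have hcomp := hS.2.1 s₁ hs₁ s₂ hs₂ w₁ w₂ a b hl₁ hl₂ hab hbre
    have htr := GSB.trivialMod_subst lt hmono U hU hcomp
    have hww : substW U (w₁ * a) = w := by rw [← hp1 w₁, hw₁]
    rw [hww] at htr
    have e : substPoly U (s₁ * MonoidAlgebra.single a 1 - MonoidAlgebra.single b 1 * s₂)
        = substPoly u₁ s₁ - substPoly u₂ s₂ := by
      rw [GSB.substPoly_sub]
      congr 1
      · rw [GSB.substPoly_eq_mapDomain, GSB.mul_single_one, MonoidAlgebra.coeff_ofCoeff, ← Finsupp.mapDomain_comp,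
          GSB.substPoly_eq_mapDomain]
        exact congrArg _ (Finsupp.mapDomain_congr (fun z _ => (hp1 z).symm))
      · rw [GSB.substPoly_eq_mapDomain, GSB.single_one_mul, MonoidAlgebra.coeff_ofCoeff, ← Finsupp.mapDomain_comp,
          GSB.substPoly_eq_mapDomain]
        exact congrArg _ (Finsupp.mapDomain_congr (fun z _ => (hp2 z).symm))
    rwa [e] at htr
  · -- proper overlap, the other way around
    have hcomp := hS.2.1 s₂ hs₂ s₁ hs₁ w₂ w₁ a b hl₂ hl₁ hab hbre
    have htr := GSB.trivialMod_subst lt hmono U hU hcomp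
    have hww : substW U (w₂ * a) = w := by rw [← hp1 w₂, hw₂]
    rw [hww] at htr
    have e : substPoly U (s₂ * MonoidAlgebra.single a 1 - MonoidAlgebra.single b 1 * s₁)
        = substPoly u₂ s₂ - substPoly u₁ s₁ := by
      rw [GSB.substPoly_sub]
      congr 1
      · rw [GSB.substPoly_eq_mapDomain, GSB.mul_single_one, MonoidAlgebra.coeff_ofCoeff, ← Finsupp.mapDomain_comp,
          GSB.substPoly_eq_mapDomain]
        exact congrArg _ (Finsupp.mapDomain_congr (fun z _ => (hp1 z).symm))
      · rw [GSB.substPoly_eq_mapDomain, GSB.single_one_mul, MonoidAlgebra.coeff_ofCoeff, ← Finsupp.mapDomain_comp,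
          GSB.substPoly_eq_mapDomain]
        exact congrArg _ (Finsupp.mapDomain_congr (fun z _ => (hp2 z).symm))
    rw [e] at htr
    unfold TrivialMod at htr ⊢
    have := Submodule.neg_mem _ htr
    rwa [neg_sub] at this
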